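/- Let D and D' be two non-trivial (v,b,r,k,λ)-BIBDs with the same parameters v, b, r, k, λ and with v ≤ b. Then the flag-graphs Γ₁(D) and Γ₁(D') are cospectral: the real adjacency matrices of Γ₁(D) and Γ₁(D') have equal characteristic polynomials. -/

import Mathlib

/-- A `(v,b,r,k,lam)`-balanced incomplete block design: a finite set of `v` points and a
family of `b` distinct blocks, each block a `k`-element subset of the points with
`1 < k < v`, such that every point lies in exactly `r` blocks and every pair of distinct
points is contained in exactly `lam` blocks (all parameters positive). -/
structure BIBD (v b r k lam : ℕ) where
  P : Type
  [fintypeP : Fintype P]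
  [decEqP : DecidableEq P]
  blocks : Finset (Finset P)
  card_points : Fintype.card P = v
  card_blocks : blocks.card = b
  block_size : ∀ c ∈ blocks, c.card = k
  one_lt_k : 1 < k
  k_lt_v : k < v
  lam_pos : 0 < lam
  point_deg : ∀ p : P, (blocks.filter (fun c => p ∈ c)).card = r
  pair_deg : ∀ p q : P, p ≠ q → (blocks.filter (fun c => p ∈ c ∧ q ∈ c)).card = lam

attribute [instance] BIBD.fintypeP BIBD.decEqP

variable {v b r k lam : ℕ}

/-- A flag of a BIBD: an incident point-block pair `(p, c)` with `p ∈ c`. -/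
def BIBD.Flag (D : BIBD v b r k lam) : Type :=
  {pc : D.P × Finset D.P // pc.2 ∈ D.blocks ∧ pc.1 ∈ pc.2}

instance (D : BIBD v b r k lam) : Fintype D.Flag :=
  inferInstanceAs (Fintype {pc : D.P × Finset D.P // pc.2 ∈ D.blocks ∧ pc.1 ∈ pc.2})

instance (D : BIBD v b r k lam) : DecidableEq D.Flag :=
  inferInstanceAs (DecidableEq {pc : D.P × Finset D.P // pc.2 ∈ D.blocks ∧ pc.1 ∈ pc.2})

/-- The flag-graph `Γ₁(D)`: vertices are the flags of `D`; two distinct flags `(p,c)` and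
`(q,d)` are adjacent iff `p = q` or `c = d`. -/
def BIBD.Gamma1 (D : BIBD v b r k lam) : SimpleGraph D.Flag where
  Adj x y := x ≠ y ∧ (x.1.1 = y.1.1 ∨ x.1.2 = y.1.2)
  symm := ⟨fun _ _ h => ⟨h.1.symm, h.2.imp Eq.symm Eq.symm⟩⟩
  loopless := ⟨fun _ h => h.1 rfl⟩

instance (D : BIBD v b r k lam) : DecidableRel D.Gamma1.Adj :=
  fun x y => inferInstanceAs (Decidable (x ≠ y ∧ (x.1.1 = y.1.1 ∨ x.1.2 = y.1.2)))

open Matrix Finset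

lemma iteOneMul (A B : Prop) [Decidable A] [Decidable B] :
    (if A then (1:ℝ) else 0) * (if B then 1 else 0) = if A ∧ B then 1 else 0 := by
  by_cases hA : A <;> by_cases hB : B <;> simp [hA, hB]

namespace BIBD

variable (D : BIBD v b r k lam)

/-- The finset of incident point-block pairs. -/
def S : Finset (D.P × Finset D.P) :=
  Finset.univ.filter (fun pc => pc.2 ∈ D.blocks ∧ pc.1 ∈ pc.2)

lemma sum_flag {M : Type*} [AddCommMonoid M] (f : D.P × Finset D.P → M) :
    ∑ x : D.Flag, f x.1 = ∑ pc ∈ D.S, f pc :=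
  (Finset.sum_subtype D.S (fun x => by simp [S]) f).symm

lemma sum_flag_ite (g : D.P × Finset D.P → Prop) [DecidablePred g] :
    ∑ x : D.Flag, (if g x.1 then (1:ℝ) else 0)
      = ∑ p : D.P, ∑ c : Finset D.P, (if (c ∈ D.blocks ∧ p ∈ c) ∧ g (p, c) then (1:ℝ) else 0) := by
  rw [D.sum_flag (fun pc => if g pc then (1:ℝ) else 0), S, Finset.sum_filter]
  rw [Fintype.sum_prod_type]
  apply Finset.sum_congr rfl
  intro p _
  apply Finset.sum_congr rfl
  intro c _
  by_cases h1 : c ∈ D.blocks ∧ p ∈ c <;> by_cases h2 : g (p, c) <;> simp [h1, h2]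

end BIBD

namespace BIBD

variable (D : BIBD v b r k lam)

lemma card_flag : Fintype.card D.Flag = v * r := by
  classical
  have h1 : Fintype.card D.Flag = ∑ x : D.Flag, 1 := Fintype.card_eq_sum_ones
  rw [h1, D.sum_flag (fun _ => (1:ℕ)), S, Finset.sum_filter, Fintype.sum_prod_type]
  have h2 : ∀ p : D.P, (∑ c : Finset D.P, if c ∈ D.blocks ∧ p ∈ c then 1 else 0) = r := by
    intro p
    rw [← Finset.card_filter]
    have : Finset.univ.filter (fun c : Finset D.P => c ∈ D.blocks ∧ p ∈ c)
        = D.blocks.filter (fun c => p ∈ c) := by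
      ext c; simp
    rw [this, D.point_deg]
  calc (∑ p : D.P, ∑ c : Finset D.P, if c ∈ D.blocks ∧ p ∈ c then 1 else 0)
      = ∑ _p : D.P, r := by exact Finset.sum_congr rfl (fun p _ => h2 p)
    _ = Fintype.card D.P * r := by rw [Finset.sum_const, Finset.card_univ, smul_eq_mul]
    _ = v * r := by rw [D.card_points]

lemma card_blocks' : Fintype.card {c // c ∈ D.blocks} = b := by
  rw [Fintype.card_coe, D.card_blocks]

def Bmat : Matrix (D.P ⊕ {c // c ∈ D.blocks}) D.Flag ℝ :=
  Matrix.of fun z x =>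
    match z with
    | Sum.inl p => if p = x.1.1 then (1:ℝ) else 0
    | Sum.inr c => if (c : Finset D.P) = x.1.2 then (1:ℝ) else 0

@[simp] lemma Bmat_inl (p : D.P) (x : D.Flag) :
    D.Bmat (Sum.inl p) x = if p = x.1.1 then (1:ℝ) else 0 := rfl

@[simp] lemma Bmat_inr (c : {c // c ∈ D.blocks}) (x : D.Flag) :
    D.Bmat (Sum.inr c) x = if (c : Finset D.P) = x.1.2 then (1:ℝ) else 0 := rfl

def Nmat : Matrix D.P {c // c ∈ D.blocks} ℝ :=
  Matrix.of fun p c => if p ∈ (c : Finset D.P) then (1:ℝ) else 0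

lemma Bsum_pp (p q : D.P) :
    ∑ x : D.Flag, (if p = x.1.1 then (1:ℝ) else 0) * (if q = x.1.1 then 1 else 0)
      = if p = q then (r:ℝ) else 0 := by
  simp only [iteOneMul]
  rw [D.sum_flag_ite (fun pc => p = pc.1 ∧ q = pc.1)]
  by_cases hpq : p = q
  · subst hpq
    simp only [and_self]
    have h1 : ∀ p' : D.P, (∑ c : Finset D.P,
        if (c ∈ D.blocks ∧ p' ∈ c) ∧ p = p' then (1:ℝ) else 0)
        = if p = p' then (∑ c : Finset D.P, if c ∈ D.blocks ∧ p' ∈ c then (1:ℝ) else 0) else 0 := by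
      intro p'
      by_cases h : p = p' <;> simp [h]
    rw [Finset.sum_congr rfl (fun p' _ => h1 p'), Finset.sum_ite_eq]
    simp only [Finset.mem_univ, if_true]
    rw [Finset.sum_boole]
    have : Finset.univ.filter (fun c : Finset D.P => c ∈ D.blocks ∧ p ∈ c)
        = D.blocks.filter (fun c => p ∈ c) := by ext c; simp
    rw [this, D.point_deg]
  · rw [if_neg hpq]
    apply Finset.sum_eq_zero; intro p' _
    apply Finset.sum_eq_zero; intro c _
    rw [if_neg]
    rintro ⟨-, rfl, rfl⟩
    exact hpq rfl

lemma Bsum_pc (p : D.P) (d : Finset D.P) (hd : d ∈ D.blocks) :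
    ∑ x : D.Flag, (if p = x.1.1 then (1:ℝ) else 0) * (if d = x.1.2 then 1 else 0)
      = if p ∈ d then 1 else 0 := by
  simp only [iteOneMul]
  rw [D.sum_flag_ite (fun pc => p = pc.1 ∧ d = pc.2)]
  have h1 : ∀ p' : D.P, (∑ c : Finset D.P,
      if (c ∈ D.blocks ∧ p' ∈ c) ∧ p = p' ∧ d = c then (1:ℝ) else 0)
      = if p = p' then (if p' ∈ d then 1 else 0) else 0 := by
    intro p'
    by_cases h : p = p'
    · subst h
      simp only [and_true, true_and, eq_self_iff_true, if_true]
      have h2 : ∀ c : Finset D.P,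
          (if (c ∈ D.blocks ∧ p ∈ c) ∧ d = c then (1:ℝ) else 0)
          = if d = c then (if c ∈ D.blocks ∧ p ∈ c then (1:ℝ) else 0) else 0 := by
        intro c; by_cases h' : d = c <;> simp [h']
      rw [Finset.sum_congr rfl (fun c _ => h2 c), Finset.sum_ite_eq]
      simp [hd]
    · simp [h]
  rw [Finset.sum_congr rfl (fun p' _ => h1 p'), Finset.sum_ite_eq]
  simp

lemma Bsum_cc (c d : Finset D.P) (hc : c ∈ D.blocks) :
    ∑ x : D.Flag, (if c = x.1.2 then (1:ℝ) else 0) * (if d = x.1.2 then 1 else 0)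
      = if c = d then (k:ℝ) else 0 := by
  simp only [iteOneMul]
  rw [D.sum_flag_ite (fun pc => c = pc.2 ∧ d = pc.2)]
  by_cases hcd : c = d
  · subst hcd
    simp only [and_self]
    have h1 : ∀ p' : D.P, (∑ c' : Finset D.P,
        if (c' ∈ D.blocks ∧ p' ∈ c') ∧ c = c' then (1:ℝ) else 0)
        = if p' ∈ c then 1 else 0 := by
      intro p'
      have h2 : ∀ c' : Finset D.P,
          (if (c' ∈ D.blocks ∧ p' ∈ c') ∧ c = c' then (1:ℝ) else 0)
          = if c = c' then (if c' ∈ D.blocks ∧ p' ∈ c' then (1:ℝ) else 0) else 0 := by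
        intro c'; by_cases h' : c = c' <;> simp [h']
      rw [Finset.sum_congr rfl (fun c' _ => h2 c'), Finset.sum_ite_eq]
      simp [hc]
    rw [Finset.sum_congr rfl (fun p' _ => h1 p'), Finset.sum_boole]
    have : Finset.univ.filter (fun p' : D.P => p' ∈ c) = c := by ext p'; simp
    rw [this, D.block_size c hc]
    simp
  · rw [if_neg hcd]
    apply Finset.sum_eq_zero; intro p' _
    apply Finset.sum_eq_zero; intro c' _
    rw [if_neg]
    rintro ⟨-, rfl, rfl⟩
    exact hcd rfl

end BIBD

namespace BIBD

variable (D : BIBD v b r k lam)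

lemma BtB : D.Bmatᵀ * D.Bmat = D.Gamma1.adjMatrix ℝ + (2:ℝ) • 1 := by
  ext x y
  rw [Matrix.mul_apply]
  simp only [Matrix.transpose_apply]
  rw [Fintype.sum_sum_type]
  simp only [Bmat_inl, Bmat_inr]
  have e1 : ∑ p : D.P, (if p = x.1.1 then (1:ℝ) else 0) * (if p = y.1.1 then 1 else 0)
      = if x.1.1 = y.1.1 then 1 else 0 := by
    simp only [iteOneMul]
    by_cases h : x.1.1 = y.1.1
    · rw [if_pos h, ← h]
      simp only [and_self]
      rw [Finset.sum_ite_eq']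
      simp
    · rw [if_neg h]
      apply Finset.sum_eq_zero; intro p _
      rw [if_neg]
      rintro ⟨rfl, h2⟩
      exact h h2
  have e2 : ∑ c : {c // c ∈ D.blocks},
      (if (c : Finset D.P) = x.1.2 then (1:ℝ) else 0) * (if (c : Finset D.P) = y.1.2 then 1 else 0)
      = if x.1.2 = y.1.2 then 1 else 0 := by
    simp only [iteOneMul]
    rw [Finset.sum_coe_sort D.blocks
      (fun c => if c = x.1.2 ∧ c = y.1.2 then (1:ℝ) else 0)]
    by_cases h : x.1.2 = y.1.2
    · rw [if_pos h, ← h]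
      simp only [and_self]
      rw [Finset.sum_ite_eq']
      simp [x.2.1]
    · rw [if_neg h]
      apply Finset.sum_eq_zero; intro c _
      rw [if_neg]
      rintro ⟨rfl, h2⟩
      exact h h2
  rw [e1, e2]
  have hadj : D.Gamma1.Adj x y ↔ (x ≠ y ∧ (x.1.1 = y.1.1 ∨ x.1.2 = y.1.2)) := Iff.rfl
  simp only [Matrix.add_apply, Matrix.smul_apply, SimpleGraph.adjMatrix_apply,
    Matrix.one_apply, hadj, smul_eq_mul, mul_ite, mul_one, mul_zero]
  by_cases hxy : x = y
  · subst hxy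
    simp
    norm_num
  · have hne : ¬(x.1.1 = y.1.1 ∧ x.1.2 = y.1.2) := by
      rintro ⟨h1, h2⟩
      exact hxy (Subtype.ext (Prod.ext h1 h2))
    by_cases h1 : x.1.1 = y.1.1 <;> by_cases h2 : x.1.2 = y.1.2 <;>
      simp [h1, h2, hxy, hne] <;> tauto

lemma BBt : D.Bmat * D.Bmatᵀ
    = Matrix.fromBlocks ((r:ℝ) • 1) D.Nmat D.Nmatᵀ ((k:ℝ) • 1) := by
  ext z w
  rcases z with p | c <;> rcases w with q | d <;>
    rw [Matrix.mul_apply] <;>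
    simp only [Matrix.transpose_apply, Bmat_inl, Bmat_inr,
      Matrix.fromBlocks_apply₁₁, Matrix.fromBlocks_apply₁₂, Matrix.fromBlocks_apply₂₁,
      Matrix.fromBlocks_apply₂₂]
  · rw [D.Bsum_pp p q]
    by_cases h : p = q <;> simp [Matrix.one_apply, h]
  · rw [D.Bsum_pc p d d.2]
    simp [Nmat]
  · have : ∀ x : D.Flag, (if (c : Finset D.P) = x.1.2 then (1:ℝ) else 0) *
        (if q = x.1.1 then 1 else 0)
        = (if q = x.1.1 then (1:ℝ) else 0) * (if (c : Finset D.P) = x.1.2 then 1 else 0) := by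
      intro x; ring
    rw [Finset.sum_congr rfl (fun x _ => this x), D.Bsum_pc q c c.2]
    simp [Nmat]
  · rw [D.Bsum_cc c d c.2]
    have hcd : ((c : Finset D.P) = (d : Finset D.P)) ↔ c = d := Subtype.ext_iff.symm
    by_cases h : c = d <;> simp [Matrix.one_apply, h, hcd]

lemma NNt : D.Nmat * D.Nmatᵀ
    = ((r:ℝ) - (lam:ℝ)) • 1 + (lam:ℝ) • Matrix.of (fun _ _ => (1:ℝ)) := by
  ext p q
  rw [Matrix.mul_apply]
  simp only [Matrix.transpose_apply, Nmat, Matrix.of_apply, iteOneMul]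
  rw [Finset.sum_coe_sort D.blocks (fun c => if p ∈ c ∧ q ∈ c then (1:ℝ) else 0),
    Finset.sum_boole]
  simp only [Matrix.add_apply, Matrix.smul_apply, Matrix.one_apply, Matrix.of_apply,
    smul_eq_mul, mul_one]
  by_cases hpq : p = q
  · subst hpq
    have : D.blocks.filter (fun c => p ∈ c ∧ p ∈ c) = D.blocks.filter (fun c => p ∈ c) := by
      ext c; simp
    rw [this, D.point_deg]
    simp
  · rw [D.pair_deg p q hpq, if_neg hpq]
    simp

end BIBD

lemma eval_charpoly' {n : Type*} [Fintype n] [DecidableEq n] (M : Matrix n n ℝ) (t : ℝ) :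
    M.charpoly.eval t = (t • (1 : Matrix n n ℝ) - M).det := by
  rw [Matrix.charpoly]
  show (Polynomial.evalRingHom t) (Matrix.charmatrix M).det = _
  rw [RingHom.map_det]
  congr 1
  ext i j
  by_cases h : i = j
  · subst h
    simp [Matrix.charmatrix_apply_eq, Matrix.one_apply]
  · simp [Matrix.charmatrix_apply_ne _ _ _ h, Matrix.one_apply_ne h]

lemma det_aJ (a c : ℝ) (α β : Type*) [Fintype α] [DecidableEq α] [Fintype β] [DecidableEq β]
    (h : Fintype.card α = Fintype.card β) :
    (a • (1 : Matrix α α ℝ) + c • Matrix.of (fun _ _ => (1:ℝ))).det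
      = (a • (1 : Matrix β β ℝ) + c • Matrix.of (fun _ _ => (1:ℝ))).det := by
  obtain ⟨e⟩ := Fintype.card_eq.mp h
  rw [← Matrix.det_submatrix_equiv_self e
    (a • (1 : Matrix β β ℝ) + c • Matrix.of (fun _ _ => (1:ℝ)))]
  congr 1
  ext i j
  by_cases hij : i = j
  · subst hij; simp [Matrix.one_apply]
  · simp [Matrix.submatrix_apply, Matrix.one_apply, hij,
      (Equiv.apply_eq_iff_eq e).not.mpr hij]

namespace BIBD

lemma key (D : BIBD v b r k lam) (t : ℝ) (h0 : t + 2 ≠ 0) (hk : t + 2 - k ≠ 0) :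
    (t • (1 : Matrix D.Flag D.Flag ℝ) - D.Gamma1.adjMatrix ℝ).det
      = (t+2) ^ (v * r) * ((t+2)⁻¹) ^ (v + b) * (t+2-(k:ℝ)) ^ b *
        ((((t+2)-(r:ℝ)) - (t+2-(k:ℝ))⁻¹ * ((r:ℝ) - (lam:ℝ))) • (1 : Matrix (Fin v) (Fin v) ℝ)
          + (-((t+2-(k:ℝ))⁻¹ * (lam:ℝ))) • Matrix.of (fun _ _ => (1:ℝ))).det := by
  classical
  set s : ℝ := t + 2 with hs
  -- step 1 : rewrite in terms of BᵀB
  have hA : t • (1 : Matrix D.Flag D.Flag ℝ) - D.Gamma1.adjMatrix ℝ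
      = s • 1 - D.Bmatᵀ * D.Bmat := by
    rw [D.BtB, hs, add_smul]
    abel
  rw [hA]
  -- step 2 : pass to BBᵀ
  have cardSum : Fintype.card (D.P ⊕ {c // c ∈ D.blocks}) = v + b := by
    rw [Fintype.card_sum, D.card_points, D.card_blocks']
  have e1 : s • (1 : Matrix D.Flag D.Flag ℝ) - D.Bmatᵀ * D.Bmat
      = s • (1 - (s⁻¹ • D.Bmatᵀ) * D.Bmat) := by
    rw [smul_sub, Matrix.smul_mul, smul_smul, mul_inv_cancel₀ h0, one_smul]
  have e2 : (1 : Matrix (D.P ⊕ {c // c ∈ D.blocks}) (D.P ⊕ {c // c ∈ D.blocks}) ℝ)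
      - D.Bmat * (s⁻¹ • D.Bmatᵀ)
      = s⁻¹ • (s • 1 - D.Bmat * D.Bmatᵀ) := by
    rw [smul_sub, smul_smul, inv_mul_cancel₀ h0, one_smul, Matrix.mul_smul]
  rw [e1, Matrix.det_smul, Matrix.det_one_sub_mul_comm, e2, Matrix.det_smul,
    D.card_flag, cardSum]
  -- step 3 : block decomposition
  rw [D.BBt]
  have e3 : s • (1 : Matrix (D.P ⊕ {c // c ∈ D.blocks}) (D.P ⊕ {c // c ∈ D.blocks}) ℝ)
      - Matrix.fromBlocks ((r:ℝ) • 1) D.Nmat D.Nmatᵀ ((k:ℝ) • 1)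
      = Matrix.fromBlocks ((s - (r:ℝ)) • 1) (-D.Nmat) (-D.Nmatᵀ) ((s - (k:ℝ)) • 1) := by
    rw [← Matrix.fromBlocks_one, Matrix.fromBlocks_smul]
    rw [sub_eq_add_neg, Matrix.fromBlocks_neg, Matrix.fromBlocks_add]
    have cA : s • (1 : Matrix D.P D.P ℝ) + -((r:ℝ) • 1) = (s - (r:ℝ)) • 1 := by
      rw [← sub_eq_add_neg, ← sub_smul]
    have cD : s • (1 : Matrix {c // c ∈ D.blocks} {c // c ∈ D.blocks} ℝ) + -((k:ℝ) • 1)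
        = (s - (k:ℝ)) • 1 := by
      rw [← sub_eq_add_neg, ← sub_smul]
    rw [cA, cD, smul_zero, smul_zero, zero_add, zero_add]
  rw [e3]
  -- step 4 : Schur complement
  have hk' : s - (k:ℝ) ≠ 0 := hk
  letI : Invertible ((s - (k:ℝ)) • (1 : Matrix {c // c ∈ D.blocks} {c // c ∈ D.blocks} ℝ)) :=
    ⟨(s - (k:ℝ))⁻¹ • 1, by
      rw [Matrix.smul_mul, Matrix.mul_smul, smul_smul, inv_mul_cancel₀ hk', mul_one, one_smul],
      by
      rw [Matrix.smul_mul, Matrix.mul_smul, smul_smul, mul_inv_cancel₀ hk', mul_one, one_smul]⟩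
  rw [Matrix.det_fromBlocks₂₂]
  have hinv : ⅟((s - (k:ℝ)) • (1 : Matrix {c // c ∈ D.blocks} {c // c ∈ D.blocks} ℝ))
      = (s - (k:ℝ))⁻¹ • 1 := rfl
  rw [hinv]
  have e4 : (s - (r:ℝ)) • (1 : Matrix D.P D.P ℝ)
      - (-D.Nmat) * ((s - (k:ℝ))⁻¹ • (1 : Matrix {c // c ∈ D.blocks} {c // c ∈ D.blocks} ℝ))
        * (-D.Nmatᵀ)
      = (s - (r:ℝ)) • 1 - (s - (k:ℝ))⁻¹ • (D.Nmat * D.Nmatᵀ) := by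
    rw [Matrix.neg_mul, Matrix.mul_neg, Matrix.neg_mul, neg_neg, Matrix.mul_smul,
      Matrix.mul_one, Matrix.smul_mul]
  rw [e4, D.NNt]
  have e5 : (s - (r:ℝ)) • (1 : Matrix D.P D.P ℝ)
      - (s - (k:ℝ))⁻¹ • (((r:ℝ) - (lam:ℝ)) • 1 + (lam:ℝ) • Matrix.of (fun _ _ => (1:ℝ)))
      = ((s - (r:ℝ)) - (s - (k:ℝ))⁻¹ * ((r:ℝ) - (lam:ℝ))) • 1
        + (-((s - (k:ℝ))⁻¹ * (lam:ℝ))) • Matrix.of (fun _ _ => (1:ℝ)) := by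
    module
  rw [e5]
  rw [Matrix.det_smul, Matrix.det_one, mul_one, D.card_blocks']
  rw [det_aJ _ _ D.P (Fin v) (by rw [D.card_points, Fintype.card_fin])]
  ring

end BIBD
/-- The flag-graphs of two non-trivial BIBDs with the same parameters are cospectral:
their real adjacency matrices have equal characteristic polynomials. -/
theorem flagGraphs_cospectral (D D' : BIBD v b r k lam) (hnt : 1 < v - k) (hvb : v ≤ b) :
    (D.Gamma1.adjMatrix ℝ).charpoly = (D'.Gamma1.adjMatrix ℝ).charpoly := by
  apply Polynomial.eq_of_infinite_eval_eq
  refine ((Set.toFinite ({-2, (k:ℝ) - 2} : Set ℝ)).infinite_compl).mono ?_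
  intro x hx
  simp only [Set.mem_compl_iff, Set.mem_insert_iff, Set.mem_singleton_iff, not_or] at hx
  obtain ⟨hx1, hx2⟩ := hx
  have h0 : x + 2 ≠ 0 := by intro h; exact hx1 (by linarith)
  have hk2 : x + 2 - (k:ℝ) ≠ 0 := by intro h; exact hx2 (by linarith)
  simp only [Set.mem_setOf_eq]
  rw [eval_charpoly', eval_charpoly', D.key x h0 hk2, D'.key x h0 hk2]
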